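/- Under Assumptions A1–A3, for any ξ with 1/α < ξ < 1/2 and Λ_n := {λ ∈ ℝ^r : ‖λ‖ ≤ n^{−ξ}}: (i) sup over θ ∈ Θ̄, λ ∈ Λ_n and 1 ≤ k ≤ K of |λᵀ ḡ^{(k)}(θ)| is O_p(n^{−ξ+1/α}) and converges to 0 in probability as n → ∞; (ii) with probability tending to 1, Λ_n ⊆ Λ̂_K(θ) for all θ ∈ Θ̄. -/

import Mathlib

open MeasureTheory ProbabilityTheory Filter Real
open scoped BigOperators ENNReal Topology RealInnerProductSpace Matrix

noncomputable section

/-- `Z n = O_p(a n)`: for every `ε > 0` there are `M > 0` and `N` such that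
`P(‖Z n‖ > M * a n) < ε` for all `n ≥ N`. -/
def IsBigOp {Ω : Type*} [MeasurableSpace Ω] (μ : Measure Ω) {E : Type*} [NormedAddCommGroup E]
    (Z : ℕ → Ω → E) (a : ℕ → ℝ) : Prop :=
  ∀ ε : ℝ, 0 < ε → ∃ M : ℝ, 0 < M ∧ ∃ N : ℕ, ∀ n ≥ N,
    μ {ω | M * a n < ‖Z n ω‖} < ENNReal.ofReal ε

/-- Convergence in distribution of the random vectors `Z n` (on `(Ω, μ)`) to the law `ν`,
phrased via integrals of bounded continuous test functions. -/
def TendstoInDistribution {Ω : Type*} [MeasurableSpace Ω] (μ : Measure Ω)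
    {E : Type*} [TopologicalSpace E] [MeasurableSpace E] (Z : ℕ → Ω → E) (ν : Measure E) : Prop :=
  ∀ f : BoundedContinuousFunction E ℝ,
    Tendsto (fun n => ∫ ω, f (Z n ω) ∂μ) atTop (𝓝 (∫ x, f x ∂ν))

/-- The centered multivariate normal law `N(0, S)` on `ℝ^p`, given by its density. -/
def mvNormalZero {p : ℕ} (S : Matrix (Fin p) (Fin p) ℝ) :
    Measure (EuclideanSpace ℝ (Fin p)) :=
  volume.withDensity fun x =>
    ENNReal.ofReal (((2 * π) ^ p * S.det) ^ (-(1/2 : ℝ)) *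
      Real.exp (-(1/2 : ℝ) * ∑ i, x i * (S⁻¹).mulVec (fun j => x j) i))

/-- Frobenius norm of a real matrix. -/
def frobNorm {r p : ℕ} (M : Matrix (Fin r) (Fin p) ℝ) : ℝ :=
  Real.sqrt (∑ i, ∑ j, (M i j) ^ 2)

/-- The subset mean estimating function `ḡ^{(k)}(θ) = m⁻¹ ∑_{i=1}^m g(x_i^{(k)}, θ)`,
where the `k`-th subset consists of the samples with indices `k*m, …, k*m + m - 1`. -/
def gbar {d r p : ℕ} {Ω : Type*}
    (g : EuclideanSpace ℝ (Fin d) → EuclideanSpace ℝ (Fin p) → EuclideanSpace ℝ (Fin r))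
    (X : ℕ → Ω → EuclideanSpace ℝ (Fin d)) (m k : ℕ)
    (θ : EuclideanSpace ℝ (Fin p)) (ω : Ω) : EuclideanSpace ℝ (Fin r) :=
  (m : ℝ)⁻¹ • ∑ i ∈ Finset.range m, g (X (k * m + i) ω) θ

/-- `Λ̂_K(θ) = {λ : λᵀ ḡ^{(k)}(θ) ∈ V, k = 1, …, K}`. -/
def LamHat {d r p : ℕ} {Ω : Type*}
    (g : EuclideanSpace ℝ (Fin d) → EuclideanSpace ℝ (Fin p) → EuclideanSpace ℝ (Fin r))
    (X : ℕ → Ω → EuclideanSpace ℝ (Fin d)) (V : Set ℝ) (K m : ℕ)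
    (θ : EuclideanSpace ℝ (Fin p)) (ω : Ω) : Set (EuclideanSpace ℝ (Fin r)) :=
  {lam | ∀ k < K, ⟪lam, gbar g X m k θ ω⟫ ∈ V}

/-- The SSMEL criterion `ℓ_S(θ, λ) = ∑_{k=1}^K log(1 + λᵀ ḡ^{(k)}(θ))`. -/
def ellS {d r p : ℕ} {Ω : Type*}
    (g : EuclideanSpace ℝ (Fin d) → EuclideanSpace ℝ (Fin p) → EuclideanSpace ℝ (Fin r))
    (X : ℕ → Ω → EuclideanSpace ℝ (Fin d)) (K m : ℕ)
    (θ : EuclideanSpace ℝ (Fin p)) (lam : EuclideanSpace ℝ (Fin r)) (ω : Ω) : ℝ :=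
  ∑ k ∈ Finset.range K, Real.log (1 + ⟪lam, gbar g X m k θ ω⟫)

/-- The profile SSMEL objective `ℓ_S(θ) = sup_{λ ∈ Λ̂_K(θ)} ℓ_S(θ, λ)`. -/
def ellSProf {d r p : ℕ} {Ω : Type*}
    (g : EuclideanSpace ℝ (Fin d) → EuclideanSpace ℝ (Fin p) → EuclideanSpace ℝ (Fin r))
    (X : ℕ → Ω → EuclideanSpace ℝ (Fin d)) (V : Set ℝ) (K m : ℕ)
    (θ : EuclideanSpace ℝ (Fin p)) (ω : Ω) : ℝ :=
  sSup ((fun lam => ellS g X K m θ lam ω) '' LamHat g X V K m θ ω)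

/-- Lemma 1 of the paper: uniform bound for λᵀ ḡ^{(k)}(θ) over the shrinking ball Λ_n. -/
theorem ssmel_lemma1
    {d p r : ℕ} (hp : 0 < p) (hpr : p ≤ r)
    {Ω : Type} [MeasurableSpace Ω] (μ : Measure Ω) [IsProbabilityMeasure μ]
    (X : ℕ → Ω → EuclideanSpace ℝ (Fin d))
    (hXmeas : ∀ i, Measurable (X i))
    (hXindep : ProbabilityTheory.iIndepFun X μ)
    (hXident : ∀ i, μ.map (X i) = μ.map (X 0))
    (g : EuclideanSpace ℝ (Fin d) → EuclideanSpace ℝ (Fin p) → EuclideanSpace ℝ (Fin r))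
    (θ₀ : EuclideanSpace ℝ (Fin p))
    (Θbar : Set (EuclideanSpace ℝ (Fin p)))
    -- (A1)
    (hΘcompact : IsCompact Θbar)
    (hθ₀int : θ₀ ∈ interior Θbar)
    (hθ₀sol : ∫ x, g x θ₀ ∂(μ.map (X 0)) = 0)
    (hθ₀uniq : ∀ θ ∈ Θbar, ∫ x, g x θ ∂(μ.map (X 0)) = 0 → θ = θ₀)
    -- (A2)
    (hgcont : ∀ᵐ x ∂(μ.map (X 0)), ContinuousOn (fun θ => g x θ) Θbar)
    (Nb : Set (EuclideanSpace ℝ (Fin p))) (hNopen : IsOpen Nb) (hθ₀N : θ₀ ∈ Nb)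
    (Dg : EuclideanSpace ℝ (Fin d) → EuclideanSpace ℝ (Fin p) → Matrix (Fin r) (Fin p) ℝ)
    (hgdiff : ∀ᵐ x ∂(μ.map (X 0)), ∀ θ ∈ Nb,
      HasFDerivAt (fun θ' => g x θ')
        (LinearMap.toContinuousLinearMap (Matrix.toEuclideanLin (Dg x θ))) θ)
    (hgdiffCont : ∀ᵐ x ∂(μ.map (X 0)), ContinuousOn (fun θ => Dg x θ) Nb)
    -- (A3)
    (α : ℝ) (hα : 2 < α)
    (hgmoment : Integrable (fun x => (⨆ θ ∈ Θbar, ‖g x θ‖) ^ α) (μ.map (X 0)))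
    -- sample splitting: n = K n * m n subsets of size m n, K n → ∞
    (K m : ℕ → ℕ) (hKm : ∀ n, K n * m n = n) (hK : Tendsto K atTop atTop)
    -- the open interval 𝒱 ∋ 0
    (V : Set ℝ) (hVopen : IsOpen V) (hV0 : (0:ℝ) ∈ V)
    :
    ∀ ξ : ℝ, 1 / α < ξ → ξ < 1 / 2 →
      (IsBigOp μ
        (fun n ω => ⨆ θ ∈ Θbar, ⨆ lam ∈ {l : EuclideanSpace ℝ (Fin r) | ‖l‖ ≤ (n : ℝ) ^ (-ξ)},
          ⨆ k ∈ Finset.range (K n), |⟪lam, gbar g X (m n) k θ ω⟫|)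
        (fun n => (n : ℝ) ^ (-ξ + 1 / α))
      ∧ TendstoInMeasure μ
        (fun (n : ℕ) ω => ⨆ θ ∈ Θbar, ⨆ lam ∈ {l : EuclideanSpace ℝ (Fin r) | ‖l‖ ≤ (n : ℝ) ^ (-ξ)},
          ⨆ k ∈ Finset.range (K n), |⟪lam, gbar g X (m n) k θ ω⟫|)
        atTop (fun _ => 0))
      ∧ Tendsto
        (fun (n : ℕ) => μ {ω | ∀ θ ∈ Θbar,
          {l : EuclideanSpace ℝ (Fin r) | ‖l‖ ≤ (n : ℝ) ^ (-ξ)}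
            ⊆ LamHat g X V (K n) (m n) θ ω})
        atTop (𝓝 1) := by
  
  intro ξ hξ1 hξ2
  classical
  have hα0 : (0:ℝ) < α := by linarith
  have hαne : α ≠ 0 := ne_of_gt hα0
  have hξα : 1 < ξ * α := by
    have := (div_lt_iff₀ hα0).1 hξ1
    linarith
  set ν := μ.map (X 0) with hν
  have hprobν : IsProbabilityMeasure ν := Measure.isProbabilityMeasure_map (hXmeas 0).aemeasurable
  set Y : EuclideanSpace ℝ (Fin d) → ℝ := fun x => ⨆ θ ∈ Θbar, ‖g x θ‖ with hYdef
  have hYnonneg : ∀ x, 0 ≤ Y x := fun x =>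
    Real.iSup_nonneg fun θ => Real.iSup_nonneg fun _ => norm_nonneg _
  set F : EuclideanSpace ℝ (Fin d) → ℝ := fun x => Y x ^ α with hFdef
  have hFint : Integrable F ν := hgmoment
  set F' : EuclideanSpace ℝ (Fin d) → ℝ := hFint.1.mk F with hF'def
  have hF'sm : StronglyMeasurable F' := hFint.1.stronglyMeasurable_mk
  have hFF' : F =ᵐ[ν] F' := hFint.1.ae_eq_mk
  set C := ∫⁻ x, ENNReal.ofReal (F' x) ∂ν with hCdef
  have hCne : C ≠ ∞ := by
    have h1 : ∫⁻ x, ENNReal.ofReal (F' x) ∂ν = ∫⁻ x, ENNReal.ofReal (F x) ∂ν :=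
      lintegral_congr_ae (hFF'.symm.mono fun x hx => by simp only [hx])
    rw [hCdef, h1]
    refine ne_of_lt (lt_of_le_of_lt (lintegral_mono fun x => ?_) hFint.2)
    rw [← ofReal_norm, Real.norm_eq_abs]
    exact ENNReal.ofReal_le_ofReal (le_abs_self _)
  -- good event
  have hGae : ∀ᵐ ω ∂μ, ∀ i : ℕ,
      ContinuousOn (fun θ => g (X i ω) θ) Θbar ∧ F (X i ω) = F' (X i ω) := by
    rw [ae_all_iff]
    intro i
    have h1 : ∀ᵐ x ∂ν, ContinuousOn (fun θ => g x θ) Θbar ∧ F x = F' x := hgcont.and hFF'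
    rw [← hXident i] at h1
    exact ae_of_ae_map (hXmeas i).aemeasurable h1
  set Gs : Set Ω := {ω | ∀ i : ℕ,
      ContinuousOn (fun θ => g (X i ω) θ) Θbar ∧ F (X i ω) = F' (X i ω)} with hGs
  have hGc : μ Gsᶜ = 0 := by
    have : ∀ᵐ ω ∂μ, ω ∈ Gs := hGae
    rwa [ae_iff] at this
  -- Markov inequality
  have hmarkov : ∀ t : ℝ, 0 < t → ν {x | t < F' x} ≤ C / ENNReal.ofReal t := by
    intro t ht
    rw [ENNReal.le_div_iff_mul_le (Or.inl (ENNReal.ofReal_pos.2 ht).ne')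
      (Or.inl ENNReal.ofReal_ne_top)]
    calc ν {x | t < F' x} * ENNReal.ofReal t
        = ENNReal.ofReal t * ν {x | t < F' x} := mul_comm _ _
      _ ≤ ENNReal.ofReal t * ν {x | ENNReal.ofReal t ≤ ENNReal.ofReal (F' x)} := by
          exact mul_le_mul_right (measure_mono fun x hx =>
            ENNReal.ofReal_le_ofReal (le_of_lt hx)) _
      _ ≤ ∫⁻ x, ENNReal.ofReal (F' x) ∂ν :=
          mul_meas_ge_le_lintegral₀
            ((ENNReal.measurable_ofReal.comp hF'sm.measurable).aemeasurable) _
  -- union bound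
  have hbad : ∀ (n : ℕ) (t : ℝ), 0 < t →
      μ (⋃ i ∈ Finset.range n, {ω | t < F' (X i ω)}) ≤ n * (C / ENNReal.ofReal t) := by
    intro n t ht
    refine le_trans (measure_biUnion_finset_le _ _) ?_
    have hper : ∀ i, μ {ω | t < F' (X i ω)} ≤ C / ENNReal.ofReal t := by
      intro i
      have hs : MeasurableSet {x | t < F' x} := hF'sm.measurable measurableSet_Ioi
      have heq : μ {ω | t < F' (X i ω)} = (μ.map (X i)) {x | t < F' x} :=
        (Measure.map_apply (hXmeas i) hs).symm
      rw [heq, hXident i]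
      exact hmarkov t ht
    calc ∑ i ∈ Finset.range n, μ {ω | t < F' (X i ω)}
        ≤ ∑ _i ∈ Finset.range n, (C / ENNReal.ofReal t) :=
          Finset.sum_le_sum (fun i _ => hper i)
      _ = n * (C / ENNReal.ofReal t) := by
          rw [Finset.sum_const, Finset.card_range, nsmul_eq_mul]
  -- pointwise bound on norms via the sup
  have hYle : ∀ x, ContinuousOn (fun θ => g x θ) Θbar → ∀ θ ∈ Θbar, ‖g x θ‖ ≤ Y x := by
    intro x hcx θ hθ
    obtain ⟨B, hB⟩ : BddAbove ((fun θ => ‖g x θ‖) '' Θbar) :=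
      (hΘcompact.image_of_continuousOn (continuous_norm.comp_continuousOn hcx)).bddAbove
    have hrange : BddAbove (Set.range fun θ' => ⨆ _ : θ' ∈ Θbar, ‖g x θ'‖) := by
      refine ⟨max B 0, ?_⟩
      rintro y ⟨θ', rfl⟩
      show (⨆ _ : θ' ∈ Θbar, ‖g x θ'‖) ≤ max B 0
      by_cases hθ' : θ' ∈ Θbar
      · rw [ciSup_pos hθ']
        exact le_max_of_le_left (hB ⟨θ', hθ', rfl⟩)
      · haveI : IsEmpty (θ' ∈ Θbar) := ⟨hθ'⟩
        rw [Real.iSup_of_isEmpty]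
        exact le_max_right _ _
    have h := le_ciSup hrange θ
    beta_reduce at h
    rwa [ciSup_pos hθ] at h
  -- key pointwise inner-product bound
  have hkey : ∀ n : ℕ, 1 ≤ n → ∀ s : ℝ, 0 < s → ∀ ω, ω ∈ Gs →
      (∀ i ∈ Finset.range n, ¬ (s ^ α < F' (X i ω))) →
      ∀ θ ∈ Θbar, ∀ lam : EuclideanSpace ℝ (Fin r), ‖lam‖ ≤ (n:ℝ) ^ (-ξ) →
      ∀ k < K n, |⟪lam, gbar g X (m n) k θ ω⟫| ≤ (n:ℝ) ^ (-ξ) * s := by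
    intro n hn s hs ω hG hnb θ hθ lam hlam k hk
    have hmpos : 0 < m n := Nat.pos_of_ne_zero fun h => by
      have h2 := hKm n
      rw [h, Nat.mul_zero] at h2
      omega
    have hsamp : ∀ j, j < n → ∀ θ' ∈ Θbar, ‖g (X j ω) θ'‖ ≤ s := by
      intro j hj θ' hθ'
      have hYj : Y (X j ω) ≤ s := by
        by_contra hcon
        push_neg at hcon
        have h1 : s ^ α < (Y (X j ω)) ^ α := Real.rpow_lt_rpow hs.le hcon hα0
        exact hnb j (Finset.mem_range.2 hj) (by rw [← (hG j).2]; exact h1)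
      exact le_trans (hYle _ (hG j).1 θ' hθ') hYj
    have hgbar : ‖gbar g X (m n) k θ ω‖ ≤ s := by
      rw [gbar, norm_smul]
      have hsum : ‖∑ i ∈ Finset.range (m n), g (X (k * m n + i) ω) θ‖ ≤ (m n : ℝ) * s := by
        refine le_trans (norm_sum_le _ _) ?_
        calc ∑ i ∈ Finset.range (m n), ‖g (X (k * m n + i) ω) θ‖
            ≤ ∑ _i ∈ Finset.range (m n), s := by
              refine Finset.sum_le_sum fun i hi => hsamp _ ?_ θ hθ
              have hi' := Finset.mem_range.1 hi
              calc k * m n + i < k * m n + m n := by omega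
                _ = (k + 1) * m n := by ring
                _ ≤ K n * m n := Nat.mul_le_mul_right _ hk
                _ = n := hKm n
          _ = (m n : ℝ) * s := by
              rw [Finset.sum_const, Finset.card_range, nsmul_eq_mul]
      have hm0 : (0:ℝ) < (m n : ℝ) := by exact_mod_cast hmpos
      calc ‖((m n : ℝ)⁻¹)‖ * ‖∑ i ∈ Finset.range (m n), g (X (k * m n + i) ω) θ‖
          ≤ (m n : ℝ)⁻¹ * ((m n : ℝ) * s) := by
            rw [Real.norm_eq_abs, abs_of_nonneg (inv_nonneg.2 hm0.le)]
            exact mul_le_mul_of_nonneg_left hsum (inv_nonneg.2 hm0.le)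
        _ = s := by field_simp
    calc |⟪lam, gbar g X (m n) k θ ω⟫| ≤ ‖lam‖ * ‖gbar g X (m n) k θ ω‖ :=
          abs_real_inner_le_norm _ _
      _ ≤ (n:ℝ) ^ (-ξ) * s :=
          mul_le_mul hlam hgbar (norm_nonneg _) (Real.rpow_nonneg (Nat.cast_nonneg n) _)
  -- the sup version
  have hkeysup : ∀ n : ℕ, 1 ≤ n → ∀ s : ℝ, 0 < s → ∀ ω, ω ∈ Gs →
      (∀ i ∈ Finset.range n, ¬ (s ^ α < F' (X i ω))) →
      (⨆ θ ∈ Θbar, ⨆ lam ∈ {l : EuclideanSpace ℝ (Fin r) | ‖l‖ ≤ (n : ℝ) ^ (-ξ)},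
        ⨆ k ∈ Finset.range (K n), |⟪lam, gbar g X (m n) k θ ω⟫|) ≤ (n:ℝ) ^ (-ξ) * s := by
    intro n hn s hs ω hG hnb
    have hns : 0 ≤ (n:ℝ) ^ (-ξ) * s :=
      mul_nonneg (Real.rpow_nonneg (Nat.cast_nonneg n) _) hs.le
    refine Real.iSup_le (fun θ => Real.iSup_le (fun hθ => Real.iSup_le (fun lam =>
      Real.iSup_le (fun hlam => Real.iSup_le (fun k => Real.iSup_le (fun hkk => ?_)
      hns) hns) hns) hns) hns) hns
    exact hkey n hn s hs ω hG hnb θ hθ lam hlam k (Finset.mem_range.1 hkk)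
  have hSnonneg : ∀ (n : ℕ) (ω : Ω), 0 ≤ ⨆ θ ∈ Θbar,
      ⨆ lam ∈ {l : EuclideanSpace ℝ (Fin r) | ‖l‖ ≤ (n : ℝ) ^ (-ξ)},
      ⨆ k ∈ Finset.range (K n), |⟪lam, gbar g X (m n) k θ ω⟫| := by
    intro n ω
    exact Real.iSup_nonneg fun θ => Real.iSup_nonneg fun _ => Real.iSup_nonneg fun lam =>
      Real.iSup_nonneg fun _ => Real.iSup_nonneg fun k => Real.iSup_nonneg fun _ => abs_nonneg _
  -- main measure bound
  have hmain : ∀ n : ℕ, 1 ≤ n → ∀ s : ℝ, 0 < s → ∀ c : ℝ, (n:ℝ) ^ (-ξ) * s ≤ c →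
      μ {ω | c < ⨆ θ ∈ Θbar,
        ⨆ lam ∈ {l : EuclideanSpace ℝ (Fin r) | ‖l‖ ≤ (n : ℝ) ^ (-ξ)},
        ⨆ k ∈ Finset.range (K n), |⟪lam, gbar g X (m n) k θ ω⟫|}
      ≤ n * (C / ENNReal.ofReal (s ^ α)) := by
    intro n hn s hs c hc
    have hsub : {ω | c < ⨆ θ ∈ Θbar,
        ⨆ lam ∈ {l : EuclideanSpace ℝ (Fin r) | ‖l‖ ≤ (n : ℝ) ^ (-ξ)},
        ⨆ k ∈ Finset.range (K n), |⟪lam, gbar g X (m n) k θ ω⟫|}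
        ⊆ Gsᶜ ∪ ⋃ i ∈ Finset.range n, {ω | s ^ α < F' (X i ω)} := by
      intro ω hω
      by_cases hg : ω ∈ Gs
      · right
        by_contra hb
        simp only [Set.mem_iUnion, not_exists, Set.mem_setOf_eq] at hb
        have := hkeysup n hn s hs ω hg (fun i hi => hb i hi)
        exact absurd hω (not_lt.2 (le_trans this hc))
      · exact Or.inl hg
    refine le_trans (measure_mono hsub) ?_
    refine le_trans (measure_union_le _ _) ?_
    rw [hGc, zero_add]
    exact hbad n (s ^ α) (Real.rpow_pos_of_pos hs _)
  refine ⟨⟨?_, ?_⟩, ?_⟩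
  · -- IsBigOp
    intro ε hε
    set M : ℝ := (C.toReal / ε + 1) ^ (1/α) with hM
    have hM1 : (0:ℝ) < C.toReal / ε + 1 := by positivity
    have hMpos : 0 < M := Real.rpow_pos_of_pos hM1 _
    have hMα : M ^ α = C.toReal / ε + 1 := by
      rw [hM, ← Real.rpow_mul hM1.le, one_div, inv_mul_cancel₀ hαne, Real.rpow_one]
    refine ⟨M, hMpos, 1, fun n hn => ?_⟩
    have hn0 : (0:ℝ) < (n:ℝ) := by exact_mod_cast hn
    set s : ℝ := M * (n:ℝ) ^ (1/α) with hsdef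
    have hspos : 0 < s := mul_pos hMpos (Real.rpow_pos_of_pos hn0 _)
    have hcs : (n:ℝ) ^ (-ξ) * s = M * (n:ℝ) ^ (-ξ + 1/α) := by
      rw [hsdef, Real.rpow_add hn0]; ring
    have hset : {ω | M * (n:ℝ) ^ (-ξ + 1/α) < ‖(⨆ θ ∈ Θbar,
        ⨆ lam ∈ {l : EuclideanSpace ℝ (Fin r) | ‖l‖ ≤ (n : ℝ) ^ (-ξ)},
        ⨆ k ∈ Finset.range (K n), |⟪lam, gbar g X (m n) k θ ω⟫|)‖}
        = {ω | M * (n:ℝ) ^ (-ξ + 1/α) < ⨆ θ ∈ Θbar,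
        ⨆ lam ∈ {l : EuclideanSpace ℝ (Fin r) | ‖l‖ ≤ (n : ℝ) ^ (-ξ)},
        ⨆ k ∈ Finset.range (K n), |⟪lam, gbar g X (m n) k θ ω⟫|} := by
      ext ω
      rw [Set.mem_setOf_eq, Set.mem_setOf_eq, Real.norm_eq_abs, abs_of_nonneg (hSnonneg n ω)]
    have h1 : μ {ω | M * (n:ℝ) ^ (-ξ + 1/α) < ‖(⨆ θ ∈ Θbar,
        ⨆ lam ∈ {l : EuclideanSpace ℝ (Fin r) | ‖l‖ ≤ (n : ℝ) ^ (-ξ)},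
        ⨆ k ∈ Finset.range (K n), |⟪lam, gbar g X (m n) k θ ω⟫|)‖}
        ≤ n * (C / ENNReal.ofReal (s ^ α)) := by
      rw [hset]
      exact hmain n hn s hspos _ hcs.le
    refine lt_of_le_of_lt h1 ?_
    have hsα : s ^ α = M ^ α * (n:ℝ) := by
      rw [hsdef, Real.mul_rpow hMpos.le (Real.rpow_pos_of_pos hn0 _).le,
        ← Real.rpow_mul hn0.le, one_div, inv_mul_cancel₀ hαne, Real.rpow_one]
    have hb0 : ENNReal.ofReal (M ^ α) ≠ 0 :=
      (ENNReal.ofReal_pos.2 (Real.rpow_pos_of_pos hMpos _)).ne'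
    have hbt : ENNReal.ofReal (M ^ α) ≠ ⊤ := ENNReal.ofReal_ne_top
    have hnn0 : ((n:ℕ) : ℝ≥0∞) ≠ 0 := Nat.cast_ne_zero.2 (by omega)
    have hnnt : ((n:ℕ) : ℝ≥0∞) ≠ ⊤ := ENNReal.natCast_ne_top n
    have heq : (n : ℝ≥0∞) * (C / ENNReal.ofReal (s ^ α)) = C / ENNReal.ofReal (M ^ α) := by
      rw [hsα, ENNReal.ofReal_mul (Real.rpow_pos_of_pos hMpos _).le, ENNReal.ofReal_natCast,
        div_eq_mul_inv, ENNReal.mul_inv (Or.inl hb0) (Or.inl hbt), div_eq_mul_inv]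
      calc (n : ℝ≥0∞) * (C * ((ENNReal.ofReal (M ^ α))⁻¹ * ((n:ℕ) : ℝ≥0∞)⁻¹))
          = (C * (ENNReal.ofReal (M ^ α))⁻¹) * (((n:ℕ) : ℝ≥0∞) * ((n:ℕ) : ℝ≥0∞)⁻¹) := by ring
        _ = C * (ENNReal.ofReal (M ^ α))⁻¹ := by
            rw [ENNReal.mul_inv_cancel hnn0 hnnt, mul_one]
    rw [heq, ENNReal.div_lt_iff (Or.inl hb0) (Or.inl hbt)]
    calc C = ENNReal.ofReal C.toReal := (ENNReal.ofReal_toReal hCne).symm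
      _ < ENNReal.ofReal (C.toReal + ε) := by
          rw [ENNReal.ofReal_lt_ofReal_iff (by positivity)]
          linarith
      _ = ENNReal.ofReal ε * ENNReal.ofReal (M ^ α) := by
          rw [← ENNReal.ofReal_mul hε.le, hMα]
          congr 1
          field_simp
  · -- TendstoInMeasure
    rw [tendstoInMeasure_iff_dist]
    intro ε hε
    have hub : ∀ n : ℕ, 1 ≤ n →
        μ {x | ε ≤ dist (⨆ θ ∈ Θbar,
          ⨆ lam ∈ {l : EuclideanSpace ℝ (Fin r) | ‖l‖ ≤ (n : ℝ) ^ (-ξ)},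
          ⨆ k ∈ Finset.range (K n), |⟪lam, gbar g X (m n) k θ x⟫|) 0}
        ≤ C * ENNReal.ofReal ((ε/2) ^ (-α) * (n:ℝ) ^ (1 - ξ * α)) := by
      intro n hn
      have hn0 : (0:ℝ) < (n:ℝ) := by exact_mod_cast hn
      set s : ℝ := (ε/2) * (n:ℝ) ^ ξ with hsdef
      have hspos : 0 < s := by positivity
      have hcs : (n:ℝ) ^ (-ξ) * s = ε / 2 := by
        rw [hsdef, ← mul_assoc, mul_comm ((n:ℝ) ^ (-ξ)) (ε/2), mul_assoc,
          ← Real.rpow_add hn0, neg_add_cancel, Real.rpow_zero, mul_one]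
      have hsub : {x | ε ≤ dist (⨆ θ ∈ Θbar,
          ⨆ lam ∈ {l : EuclideanSpace ℝ (Fin r) | ‖l‖ ≤ (n : ℝ) ^ (-ξ)},
          ⨆ k ∈ Finset.range (K n), |⟪lam, gbar g X (m n) k θ x⟫|) 0}
          ⊆ {ω | ε/2 < ⨆ θ ∈ Θbar,
          ⨆ lam ∈ {l : EuclideanSpace ℝ (Fin r) | ‖l‖ ≤ (n : ℝ) ^ (-ξ)},
          ⨆ k ∈ Finset.range (K n), |⟪lam, gbar g X (m n) k θ ω⟫|} := by
        intro ω hω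
        rw [Set.mem_setOf_eq, Real.dist_eq, sub_zero, abs_of_nonneg (hSnonneg n ω)] at hω
        rw [Set.mem_setOf_eq]
        linarith
      refine le_trans (measure_mono hsub) (le_trans (hmain n hn s hspos (ε/2) hcs.le) ?_)
      -- n * (C / ofReal (s^α)) ≤ C * ofReal ((ε/2)^(-α) * n^(1-ξα))
      have hsα : s ^ α = (ε/2) ^ α * (n:ℝ) ^ (ξ * α) := by
        rw [hsdef, Real.mul_rpow (by positivity) (Real.rpow_pos_of_pos hn0 _).le,
          ← Real.rpow_mul hn0.le]
      have hquot : (n:ℝ) / s ^ α = (ε/2) ^ (-α) * (n:ℝ) ^ (1 - ξ * α) := by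
        rw [hsα, Real.rpow_neg (by positivity : (0:ℝ) ≤ ε/2),
          Real.rpow_sub hn0, Real.rpow_one]
        field_simp
      have : (n : ℝ≥0∞) * (C / ENNReal.ofReal (s ^ α))
          = C * ENNReal.ofReal ((ε/2) ^ (-α) * (n:ℝ) ^ (1 - ξ * α)) := by
        rw [← hquot, ENNReal.ofReal_div_of_pos (Real.rpow_pos_of_pos hspos _),
          ENNReal.ofReal_natCast]
        rw [div_eq_mul_inv, div_eq_mul_inv]
        ring
      rw [this]
  -- the upper bound tends to 0
    have hr0 : Tendsto (fun n : ℕ => (ε/2) ^ (-α) * (n:ℝ) ^ (1 - ξ * α)) atTop (𝓝 0) := by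
      have h1 : Tendsto (fun x : ℝ => x ^ (-(ξ * α - 1))) atTop (𝓝 0) :=
        tendsto_rpow_neg_atTop (by linarith)
      have h2 : Tendsto (fun n : ℕ => ((n:ℝ)) ^ (1 - ξ * α)) atTop (𝓝 0) := by
        have := h1.comp tendsto_natCast_atTop_atTop (α := ℕ)
        simpa [neg_sub, Function.comp_def] using this
      have := h2.const_mul ((ε/2) ^ (-α))
      simpa using this
    have hub0 : Tendsto (fun n : ℕ =>
        C * ENNReal.ofReal ((ε/2) ^ (-α) * (n:ℝ) ^ (1 - ξ * α))) atTop (𝓝 0) := by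
      have h3 : Tendsto (fun n : ℕ =>
          ENNReal.ofReal ((ε/2) ^ (-α) * (n:ℝ) ^ (1 - ξ * α))) atTop (𝓝 0) := by
        have := (ENNReal.continuous_ofReal.tendsto 0).comp hr0
        simpa [Function.comp_def] using this
      have := ENNReal.Tendsto.const_mul (a := C) h3 (Or.inr hCne)
      simpa using this
    refine tendsto_of_tendsto_of_tendsto_of_le_of_le' tendsto_const_nhds hub0 ?_ ?_
    · exact Eventually.of_forall fun n => zero_le
    · exact eventually_atTop.2 ⟨1, fun n hn => hub n hn⟩
  · -- part (ii)
    obtain ⟨δ, hδ, hball⟩ := Metric.isOpen_iff.1 hVopen 0 hV0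
    have hlow : ∀ n : ℕ, 1 ≤ n →
        1 - C * ENNReal.ofReal ((δ/2) ^ (-α) * (n:ℝ) ^ (1 - ξ * α))
        ≤ μ {ω | ∀ θ ∈ Θbar,
          {l : EuclideanSpace ℝ (Fin r) | ‖l‖ ≤ (n : ℝ) ^ (-ξ)}
            ⊆ LamHat g X V (K n) (m n) θ ω} := by
      intro n hn
      have hn0 : (0:ℝ) < (n:ℝ) := by exact_mod_cast hn
      set s : ℝ := (δ/2) * (n:ℝ) ^ ξ with hsdef
      have hspos : 0 < s := by positivity
      have hcs : (n:ℝ) ^ (-ξ) * s = δ / 2 := by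
        rw [hsdef, ← mul_assoc, mul_comm ((n:ℝ) ^ (-ξ)) (δ/2), mul_assoc,
          ← Real.rpow_add hn0, neg_add_cancel, Real.rpow_zero, mul_one]
      set A : Set Ω := Gs ∩ {ω | ∀ i ∈ Finset.range n, ¬ (s ^ α < F' (X i ω))} with hA
      have hAsub : A ⊆ {ω | ∀ θ ∈ Θbar,
          {l : EuclideanSpace ℝ (Fin r) | ‖l‖ ≤ (n : ℝ) ^ (-ξ)}
            ⊆ LamHat g X V (K n) (m n) θ ω} := by
        rintro ω ⟨hg, hnb⟩ θ hθ lam hlam k hk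
        have hle := hkey n hn s hspos ω hg hnb θ hθ lam hlam k hk
        rw [hcs] at hle
        refine hball ?_
        rw [Metric.mem_ball, Real.dist_eq, sub_zero]
        calc |⟪lam, gbar g X (m n) k θ ω⟫| ≤ δ/2 := hle
          _ < δ := by linarith
      have hAc : μ Aᶜ ≤ C * ENNReal.ofReal ((δ/2) ^ (-α) * (n:ℝ) ^ (1 - ξ * α)) := by
        have hAc1 : Aᶜ ⊆ Gsᶜ ∪ ⋃ i ∈ Finset.range n, {ω | s ^ α < F' (X i ω)} := by
          intro ω hω
          rw [hA, Set.compl_inter] at hω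
          rcases hω with h | h
          · exact Or.inl h
          · right
            rw [Set.mem_compl_iff, Set.mem_setOf_eq] at h
            push_neg at h
            obtain ⟨i, hi, hi2⟩ := h
            exact Set.mem_biUnion hi hi2
        refine le_trans (measure_mono hAc1) (le_trans (measure_union_le _ _) ?_)
        rw [hGc, zero_add]
        refine le_trans (hbad n (s ^ α) (Real.rpow_pos_of_pos hspos _)) (le_of_eq ?_)
        have hsα : s ^ α = (δ/2) ^ α * (n:ℝ) ^ (ξ * α) := by
          rw [hsdef, Real.mul_rpow (by positivity) (Real.rpow_pos_of_pos hn0 _).le,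
            ← Real.rpow_mul hn0.le]
        have hquot : (n:ℝ) / s ^ α = (δ/2) ^ (-α) * (n:ℝ) ^ (1 - ξ * α) := by
          rw [hsα, Real.rpow_neg (by positivity : (0:ℝ) ≤ δ/2),
            Real.rpow_sub hn0, Real.rpow_one]
          field_simp
        rw [← hquot, ENNReal.ofReal_div_of_pos (Real.rpow_pos_of_pos hspos _),
          ENNReal.ofReal_natCast, div_eq_mul_inv, div_eq_mul_inv]
        ring
      have hAge : 1 - μ Aᶜ ≤ μ A := by
        rw [tsub_le_iff_right]
        calc (1 : ℝ≥0∞) = μ Set.univ := (measure_univ).symm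
          _ = μ (A ∪ Aᶜ) := by rw [Set.union_compl_self]
          _ ≤ μ A + μ Aᶜ := measure_union_le _ _
      calc 1 - C * ENNReal.ofReal ((δ/2) ^ (-α) * (n:ℝ) ^ (1 - ξ * α))
          ≤ 1 - μ Aᶜ := tsub_le_tsub_left hAc 1
        _ ≤ μ A := hAge
        _ ≤ _ := measure_mono hAsub
    have hr0 : Tendsto (fun n : ℕ => (δ/2) ^ (-α) * (n:ℝ) ^ (1 - ξ * α)) atTop (𝓝 0) := by
      have h1 : Tendsto (fun x : ℝ => x ^ (-(ξ * α - 1))) atTop (𝓝 0) :=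
        tendsto_rpow_neg_atTop (by linarith)
      have h2 : Tendsto (fun n : ℕ => ((n:ℝ)) ^ (1 - ξ * α)) atTop (𝓝 0) := by
        have := h1.comp tendsto_natCast_atTop_atTop (α := ℕ)
        simpa [neg_sub, Function.comp_def] using this
      have := h2.const_mul ((δ/2) ^ (-α))
      simpa using this
    have hub0 : Tendsto (fun n : ℕ =>
        C * ENNReal.ofReal ((δ/2) ^ (-α) * (n:ℝ) ^ (1 - ξ * α))) atTop (𝓝 0) := by
      have h3 : Tendsto (fun n : ℕ =>
          ENNReal.ofReal ((δ/2) ^ (-α) * (n:ℝ) ^ (1 - ξ * α))) atTop (𝓝 0) := by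
        have := (ENNReal.continuous_ofReal.tendsto 0).comp hr0
        simpa [Function.comp_def] using this
      have := ENNReal.Tendsto.const_mul (a := C) h3 (Or.inr hCne)
      simpa using this
    have hlow0 : Tendsto (fun n : ℕ =>
        1 - C * ENNReal.ofReal ((δ/2) ^ (-α) * (n:ℝ) ^ (1 - ξ * α))) atTop (𝓝 1) := by
      have := ENNReal.Tendsto.sub (tendsto_const_nhds (x := (1:ℝ≥0∞))) hub0
        (Or.inl ENNReal.one_ne_top)
      simpa using this
    refine tendsto_of_tendsto_of_tendsto_of_le_of_le' hlow0 tendsto_const_nhds ?_ ?_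
    · exact eventually_atTop.2 ⟨1, fun n hn => hlow n hn⟩
    · exact Eventually.of_forall fun n => prob_le_one
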